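/- Let X and Y be random variables on a common measurable space. Suppose there exist ε, δ > 0 such that for every measurable event A there is a joint coupling of (X,Y) and an event G with Pr[G] ≥ 1 - δ satisfying e^{-ε}·Pr[Y ∈ A | G] ≤ Pr[X ∈ A | G] ≤ e^{ε}·Pr[Y ∈ A | G]. Then for every measurable A: e^{-ε}(Pr[Y ∈ A] - δ) ≤ Pr[X ∈ A] ≤ e^{ε}·Pr[Y ∈ A] + δ. -/
import Mathlib


open MeasureTheory ProbabilityTheory

/-- Let `μX` and `μY` be the distributions of random variables `X`, `Y` on a common
measurable space `α`.  Suppose there are `ε, δ > 0` such that for every measurable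
event `A` there is a coupling `(X', Y')` of `(μX, μY)` and an event `G` with
`Pr[G] ≥ 1 - δ` such that
`e^{-ε}·Pr[Y' ∈ A | G] ≤ Pr[X' ∈ A | G] ≤ e^{ε}·Pr[Y' ∈ A | G]`.
Then for every measurable `A`:
`e^{-ε}(Pr[Y ∈ A] - δ) ≤ Pr[X ∈ A] ≤ e^{ε}·Pr[Y ∈ A] + δ`. -/
theorem stmt3 {α : Type*} [MeasurableSpace α]
    (μX μY : Measure α) [IsProbabilityMeasure μX] [IsProbabilityMeasure μY]
    (ε δ : ℝ) (hε : 0 < ε) (hδ : 0 < δ)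
    (hcoup : ∀ A : Set α, MeasurableSet A →
      ∃ (Ω : Type) (_ : MeasurableSpace Ω) (P : Measure Ω) (_ : IsProbabilityMeasure P)
        (X Y : Ω → α) (_ : Measurable X) (_ : Measurable Y)
        (G : Set Ω) (_ : MeasurableSet G),
        P.map X = μX ∧ P.map Y = μY ∧ (1 - δ : ℝ) ≤ (P G).toReal ∧
        Real.exp (-ε) * ((P[|G]) (Y ⁻¹' A)).toReal ≤ ((P[|G]) (X ⁻¹' A)).toReal ∧
        ((P[|G]) (X ⁻¹' A)).toReal ≤ Real.exp ε * ((P[|G]) (Y ⁻¹' A)).toReal) :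
    ∀ A : Set α, MeasurableSet A →
      Real.exp (-ε) * ((μY A).toReal - δ) ≤ (μX A).toReal ∧
      (μX A).toReal ≤ Real.exp ε * (μY A).toReal + δ := by
  intro A hA
  obtain ⟨Ω, mΩ, P, hP, X, Y, hX, hY, G, hG, hPX, hPY, hG1, hlow, hhigh⟩ := hcoup A hA
  set g : ℝ := (P G).toReal with hg
  have hg0 : 0 ≤ g := ENNReal.toReal_nonneg
  have hg1 : g ≤ 1 := by
    have := prob_le_one (μ := P) (s := G)
    simpa [hg] using ENNReal.toReal_mono (by simp) this
  have hfin : ∀ E : Set Ω, P E ≠ ⊤ := fun E => measure_ne_top P E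
  have key : ∀ E : Set Ω, ((P[|G]) E).toReal * g = (P (G ∩ E)).toReal := by
    intro E
    rw [ProbabilityTheory.cond_apply hG]
    rcases eq_or_ne (P G) 0 with h0 | h0
    · have h1 : P (G ∩ E) = 0 := measure_mono_null Set.inter_subset_left h0
      simp [h1, h0, hg]
    · have hgne : g ≠ 0 := by
        simp [hg, ENNReal.toReal_eq_zero_iff, hfin G, h0]
      rw [ENNReal.toReal_mul, ENNReal.toReal_inv, hg, mul_comm ((P G).toReal)⁻¹,
        mul_assoc, inv_mul_cancel₀ hgne, mul_one]
  have split : ∀ E : Set Ω, (P E).toReal ≤ (P (G ∩ E)).toReal + (1 - g) := by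
    intro E
    have h1 : P E ≤ P (G ∩ E) + P Gᶜ := by
      refine le_trans (measure_mono ?_) (measure_union_le _ _)
      intro x hx
      by_cases hxG : x ∈ G
      · exact Or.inl ⟨hxG, hx⟩
      · exact Or.inr hxG
    have h2 : (P Gᶜ).toReal = 1 - g := by
      have hmc := measure_compl hG (hfin G)
      rw [measure_univ] at hmc
      rw [hmc, ENNReal.toReal_sub_of_le prob_le_one (by simp)]
      simp [hg]
    have h3 := ENNReal.toReal_mono (by finiteness) h1
    rw [ENNReal.toReal_add (hfin _) (hfin _), h2] at h3
    exact h3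
  have lower : ∀ E : Set Ω, (P (G ∩ E)).toReal ≤ (P E).toReal :=
    fun E => ENNReal.toReal_mono (hfin E) (measure_mono Set.inter_subset_right)
  have hmapX : (P (X ⁻¹' A)).toReal = (μX A).toReal := by
    rw [← hPX, Measure.map_apply hX hA]
  have hmapY : (P (Y ⁻¹' A)).toReal = (μY A).toReal := by
    rw [← hPY, Measure.map_apply hY hA]
  set cX : ℝ := ((P[|G]) (X ⁻¹' A)).toReal with hcX
  set cY : ℝ := ((P[|G]) (Y ⁻¹' A)).toReal with hcY
  have hcY0 : 0 ≤ cY := ENNReal.toReal_nonneg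
  have hcX0 : 0 ≤ cX := ENNReal.toReal_nonneg
  have keyX := key (X ⁻¹' A)
  have keyY := key (Y ⁻¹' A)
  have splitX := split (X ⁻¹' A)
  have splitY := split (Y ⁻¹' A)
  have lowX := lower (X ⁻¹' A)
  have lowY := lower (Y ⁻¹' A)
  have hgd : 1 - g ≤ δ := by linarith
  have hexp : (0:ℝ) < Real.exp ε := Real.exp_pos ε
  have hexp' : (0:ℝ) < Real.exp (-ε) := Real.exp_pos (-ε)
  constructor
  · -- lower bound
    rw [← hmapX, ← hmapY]
    have h1 : (P (Y ⁻¹' A)).toReal - δ ≤ cY * g := by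
      rw [hcY, keyY]; linarith
    have h2 : Real.exp (-ε) * (cY * g) ≤ cX * g :=
      mul_le_mul_of_nonneg_right hlow hg0 |>.trans_eq' (by ring)
    calc Real.exp (-ε) * ((P (Y ⁻¹' A)).toReal - δ)
        ≤ Real.exp (-ε) * (cY * g) := by
          exact mul_le_mul_of_nonneg_left h1 hexp'.le
      _ ≤ cX * g := h2
      _ = (P (G ∩ X ⁻¹' A)).toReal := keyX
      _ ≤ (P (X ⁻¹' A)).toReal := lowX
  · -- upper bound
    rw [← hmapX, ← hmapY]
    have h1 : cX * g ≤ Real.exp ε * (cY * g) := by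
      have := mul_le_mul_of_nonneg_right hhigh hg0
      linarith [this]
    have h2 : cY * g ≤ (P (Y ⁻¹' A)).toReal := by rw [keyY]; exact lowY
    have h3 : (P (X ⁻¹' A)).toReal ≤ cX * g + (1 - g) := by rw [keyX]; exact splitX
    nlinarith [mul_le_mul_of_nonneg_left h2 hexp.le]
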